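/- Let a be the minimum letter of a totally ordered alphabet A and x a finite word over A. Then x is singular if and only if λ_a(x)·a is singular, where λ_a is the morphism fixing a and sending every other letter d' to a d'. -/

import Mathlib

/-- Lexicographic order on finite words with the convention that
`u < v` whenever `v` is a proper prefix of `u`. -/
def Wlt {A : Type*} [LinearOrder A] : List A → List A → Prop
  | [], _ => False
  | _ :: _, [] => True
  | a :: u, b :: v => a < b ∨ (a = b ∧ Wlt u v)

/-- A finite word is singular if every factorization `x = reverse u ++ v ++ w`
with `v` nonempty, `v ≠ reverse v`, `u ≠ w` satisfies `v < v̄ ↔ w < u`. -/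
def Singular {A : Type*} [LinearOrder A] (x : List A) : Prop :=
  ∀ u v w : List A, x = u.reverse ++ v ++ w → v ≠ [] → v ≠ v.reverse → u ≠ w →
    (Wlt v v.reverse ↔ Wlt w u)

/-- The morphism `λ_d` sending `d ↦ d` and `d' ↦ d d'` for `d' ≠ d`. -/
def lamM {A : Type*} [DecidableEq A] (d : A) (x : List A) : List A :=
  (x.map (fun e => if e = d then [d] else [d, e])).flatten

/-- The morphism `ρ_d` sending `d ↦ d` and `d' ↦ d' d` for `d' ≠ d`. -/
def rhoM {A : Type*} [DecidableEq A] (d : A) (x : List A) : List A :=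
  (x.map (fun e => if e = d then [d] else [e, d])).flatten

section
variable {A : Type*} [LinearOrder A] {a : A}

@[simp] lemma lamM_nil : lamM a ([] : List A) = [] := rfl
@[simp] lemma rhoM_nil : rhoM a ([] : List A) = [] := rfl

lemma lamM_cons (e : A) (s : List A) :
    lamM a (e :: s) = (if e = a then [a] else [a, e]) ++ lamM a s := by
  by_cases h : e = a <;> simp [lamM, h]

lemma rhoM_cons (e : A) (s : List A) :
    rhoM a (e :: s) = (if e = a then [a] else [e, a]) ++ rhoM a s := by
  by_cases h : e = a <;> simp [rhoM, h]

lemma lamM_append (s t : List A) : lamM a (s ++ t) = lamM a s ++ lamM a t := by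
  simp [lamM]

lemma rhoM_append (s t : List A) : rhoM a (s ++ t) = rhoM a s ++ rhoM a t := by
  simp [rhoM]

/-- Key identity: `λ_a(s) ++ [a] = a :: ρ_a(s)`. -/
lemma lam_append_a (s : List A) : lamM a s ++ [a] = a :: rhoM a s := by
  induction s with
  | nil => rfl
  | cons e s ih =>
    by_cases h : e = a <;>
      simp [lamM_cons, rhoM_cons, h, ih.symm]

lemma rhoM_ne_nil {s : List A} (hs : s ≠ []) : rhoM a s ≠ [] := by
  cases s with
  | nil => exact absurd rfl hs
  | cons e s => by_cases h : e = a <;> simp [rhoM_cons, h]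

lemma reverse_rhoM (s : List A) : (rhoM a s).reverse = lamM a s.reverse := by
  induction s with
  | nil => rfl
  | cons e s ih =>
    by_cases h : e = a <;>
      simp [rhoM_cons, h, ih, lamM_append, lamM_cons]

lemma reverse_lamM (s : List A) : (lamM a s).reverse = rhoM a s.reverse := by
  have := reverse_rhoM (a := a) (s := s.reverse)
  rw [List.reverse_reverse] at this
  rw [← this, List.reverse_reverse]

lemma reverse_lam_a (s : List A) :
    (lamM a s ++ [a]).reverse = lamM a s.reverse ++ [a] := by
  rw [List.reverse_append, reverse_lamM, lam_append_a]
  rfl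

lemma rhoM_inj : ∀ {s t : List A}, rhoM a s = rhoM a t → s = t := by
  intro s
  induction s with
  | nil =>
    intro t h
    cases t with
    | nil => rfl
    | cons e t => exact absurd h.symm (rhoM_ne_nil (by simp))
  | cons e s ih =>
    intro t h
    cases t with
    | nil => exact absurd h (rhoM_ne_nil (by simp))
    | cons f t =>
      by_cases he : e = a <;> by_cases hf : f = a
      · simp only [rhoM_cons, if_pos he, if_pos hf, List.cons_append,
          List.nil_append, List.cons.injEq] at h
        rw [he, hf, ih h.2]
      · simp only [rhoM_cons, if_pos he, if_neg hf, List.cons_append,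
          List.nil_append, List.cons.injEq] at h
        exact absurd h.1.symm hf
      · simp only [rhoM_cons, if_neg he, if_pos hf, List.cons_append,
          List.nil_append, List.cons.injEq] at h
        exact absurd h.1 he
      · simp only [rhoM_cons, if_neg he, if_neg hf, List.cons_append,
          List.nil_append, List.cons.injEq] at h
        rw [h.1, ih h.2.2]


@[simp] lemma wlt_nil_left (l : List A) : ¬ Wlt [] l := fun h => h

@[simp] lemma wlt_cons_nil (c : A) (u : List A) : Wlt (c :: u) [] := trivial

lemma wlt_cons_cons (c d : A) (u v : List A) :
    Wlt (c :: u) (d :: v) ↔ c < d ∨ (c = d ∧ Wlt u v) := Iff.rfl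

variable (ha : ∀ e : A, a ≤ e)
include ha

lemma not_lt_a (e : A) : ¬ e < a := fun h => absurd (ha e) (not_le.mpr h)

lemma wlt_rho : ∀ s t : List A, Wlt (rhoM a s) (rhoM a t) ↔ Wlt s t := by
  intro s
  induction s with
  | nil => intro t; simp
  | cons c s ih =>
    intro t
    cases t with
    | nil =>
      by_cases hc : c = a <;> simp [rhoM_cons, hc]
    | cons e t =>
      by_cases hc : c = a <;> by_cases he : e = a
      · simp [rhoM_cons, hc, he, wlt_cons_cons, lt_irrefl, ih]
      · have hae : a < e := lt_of_le_of_ne (ha e) (Ne.symm he)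
        simp [rhoM_cons, hc, he, wlt_cons_cons, hae]
      · simp [rhoM_cons, hc, he, wlt_cons_cons, not_lt_a ha]
      · simp [rhoM_cons, hc, he, wlt_cons_cons, lt_irrefl, ih]

lemma wlt_lam_a (s t : List A) :
    Wlt (lamM a s ++ [a]) (lamM a t ++ [a]) ↔ Wlt s t := by
  rw [lam_append_a, lam_append_a, wlt_cons_cons]
  simp [lt_irrefl, wlt_rho ha]

end

section
variable {A : Type*} [LinearOrder A] {a : A}

lemma wlt_append : ∀ (s t z₁ z₂ : List A), s.length = t.length →
    (Wlt (s ++ z₁) (t ++ z₂) ↔ Wlt s t ∨ (s = t ∧ Wlt z₁ z₂)) := by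
  intro s
  induction s with
  | nil =>
    intro t z₁ z₂ hl
    cases t with
    | nil => simp
    | cons e t => simp at hl
  | cons c s ih =>
    intro t z₁ z₂ hl
    cases t with
    | nil => simp at hl
    | cons e t =>
      simp only [List.length_cons, Nat.succ_inj] at hl
      simp only [List.cons_append, wlt_cons_cons, ih t z₁ z₂ hl, List.cons.injEq]
      by_cases hce : c = e
      · subst hce
        tauto
      · simp [hce]

lemma rhoM_length_eq_lamM (s : List A) : (rhoM a s).length = (lamM a s).length := by
  induction s with
  | nil => rfl
  | cons e s ih => by_cases h : e = a <;> simp [rhoM_cons, lamM_cons, h, ih]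

lemma rhoM_reverse_length (s : List A) :
    (rhoM a s.reverse).length = (rhoM a s).length := by
  rw [← reverse_lamM, List.length_reverse, rhoM_length_eq_lamM]

lemma rho_dropLast {s : List A} (hs : s ≠ []) :
    (rhoM a s).dropLast ++ [a] = rhoM a s := by
  induction s with
  | nil => exact absurd rfl hs
  | cons e s ih =>
    cases s with
    | nil => by_cases h : e = a <;> simp [rhoM_cons, h]
    | cons f s =>
      rw [rhoM_cons, List.dropLast_append_of_ne_nil (rhoM_ne_nil (by simp)),
        List.append_assoc, ih (by simp)]

lemma lam_head {s : List A} (hs : s ≠ []) :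
    lamM a s = a :: (rhoM a s).dropLast := by
  have h1 : lamM a s ++ [a] = (a :: (rhoM a s).dropLast) ++ [a] := by
    rw [lam_append_a, List.cons_append, rho_dropLast hs]
  exact List.append_cancel_right h1

lemma reverse_dropLast_rho {s : List A} (hs : s ≠ []) :
    ((rhoM a s).dropLast).reverse = (rhoM a s.reverse).dropLast := by
  have h1 : (rhoM a s).reverse = a :: ((rhoM a s).dropLast).reverse := by
    conv_lhs => rw [← rho_dropLast hs]
    simp
  rw [reverse_rhoM, lam_head (by simpa using hs)] at h1
  exact (List.cons.injEq .. ▸ h1).2.symm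


lemma struct_lam : ∀ (x P Q : List A), lamM a x ++ [a] = P ++ Q →
    ∃ p s, x = p ++ s ∧
      ((P = lamM a p ∧ Q = lamM a s ++ [a]) ∨ (P = lamM a p ++ [a] ∧ Q = rhoM a s)) := by
  intro x
  induction x with
  | nil =>
    intro P Q h
    cases P with
    | nil => exact ⟨[], [], rfl, Or.inl ⟨rfl, by simpa using h.symm⟩⟩
    | cons c₁ P' =>
      simp only [lamM_nil, List.nil_append, List.cons_append] at h
      injection h with h1 h2
      obtain ⟨rfl, rfl⟩ := List.append_eq_nil_iff.mp h2.symm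
      exact ⟨[], [], rfl, Or.inr ⟨by simp [h1], rfl⟩⟩
  | cons c x' ih =>
    intro P Q h
    cases P with
    | nil => exact ⟨[], c :: x', rfl, Or.inl ⟨rfl, by simpa using h.symm⟩⟩
    | cons c₁ P' =>
      by_cases hc : c = a
      · rw [lamM_cons, if_pos hc] at h
        simp only [List.cons_append, List.nil_append, List.append_assoc] at h
        injection h with h1 h2
        obtain ⟨p, s, rfl, hcase⟩ := ih P' Q h2
        refine ⟨c :: p, s, rfl, ?_⟩
        rcases hcase with ⟨rfl, hQ⟩ | ⟨rfl, hQ⟩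
        · exact Or.inl ⟨by simp [lamM_cons, hc, h1], hQ⟩
        · exact Or.inr ⟨by simp [lamM_cons, hc, h1], hQ⟩
      · rw [lamM_cons, if_neg hc] at h
        simp only [List.cons_append, List.nil_append, List.append_assoc] at h
        injection h with h1 h2
        -- h2 : c :: (lamM a x' ++ [a]) = P' ++ Q
        cases P' with
        | nil =>
          refine ⟨[], c :: x', rfl, Or.inr ⟨by simp [h1], ?_⟩⟩
          have h2' : Q = c :: (lamM a x' ++ [a]) := by
            rw [← List.nil_append Q, ← h2]
          rw [h2', lam_append_a, rhoM_cons, if_neg hc]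
          rfl
        | cons c₂ P'' =>
          simp only [List.cons_append] at h2
          injection h2 with h3 h4
          obtain ⟨p, s, rfl, hcase⟩ := ih P'' Q h4
          refine ⟨c :: p, s, rfl, ?_⟩
          rcases hcase with ⟨rfl, hQ⟩ | ⟨rfl, hQ⟩
          · exact Or.inl ⟨by simp [lamM_cons, hc, ← h1, ← h3], hQ⟩
          · exact Or.inr ⟨by simp [lamM_cons, hc, ← h1, ← h3], hQ⟩

lemma struct_rho : ∀ (t P Q : List A), rhoM a t = P ++ Q →
    ∃ m s, t = m ++ s ∧
      ((P = rhoM a m ∧ Q = rhoM a s) ∨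
        (m ≠ [] ∧ P = (rhoM a m).dropLast ∧ Q = a :: rhoM a s)) := by
  intro t
  induction t with
  | nil =>
    intro P Q h
    obtain ⟨rfl, rfl⟩ := List.append_eq_nil_iff.mp h.symm
    exact ⟨[], [], rfl, Or.inl ⟨rfl, rfl⟩⟩
  | cons c t' ih =>
    intro P Q h
    cases P with
    | nil => exact ⟨[], c :: t', rfl, Or.inl ⟨rfl, by simpa using h.symm⟩⟩
    | cons c₁ P' =>
      by_cases hc : c = a
      · rw [rhoM_cons, if_pos hc] at h
        simp only [List.cons_append, List.nil_append] at h
        injection h with h1 h2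
        obtain ⟨m, s, rfl, hcase⟩ := ih P' Q h2
        refine ⟨c :: m, s, rfl, ?_⟩
        rcases hcase with ⟨rfl, hQ⟩ | ⟨hm, rfl, hQ⟩
        · exact Or.inl ⟨by simp [rhoM_cons, hc, h1], hQ⟩
        · refine Or.inr ⟨by simp, ?_, hQ⟩
          rw [rhoM_cons, if_pos hc,
            List.dropLast_append_of_ne_nil (rhoM_ne_nil hm)]
          simp [h1]
      · rw [rhoM_cons, if_neg hc] at h
        simp only [List.cons_append, List.nil_append] at h
        injection h with h1 h2
        -- h2 : a :: rhoM a t' = P' ++ Q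
        cases P' with
        | nil =>
          have h2' : Q = a :: rhoM a t' := by
            rw [← List.nil_append Q, ← h2]
          refine ⟨[c], t', rfl, Or.inr ⟨by simp, ?_, h2'⟩⟩
          rw [rhoM_cons, if_neg hc]
          simp [h1]
        | cons c₂ P'' =>
          simp only [List.cons_append] at h2
          injection h2 with h3 h4
          obtain ⟨m, s, rfl, hcase⟩ := ih P'' Q h4
          refine ⟨c :: m, s, rfl, ?_⟩
          rcases hcase with ⟨rfl, hQ⟩ | ⟨hm, rfl, hQ⟩
          · exact Or.inl ⟨by simp [rhoM_cons, hc, ← h1, ← h3], hQ⟩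
          · refine Or.inr ⟨by simp, ?_, hQ⟩
            rw [rhoM_cons, if_neg hc,
              List.dropLast_append_of_ne_nil (rhoM_ne_nil hm)]
            simp [← h1, ← h3]

end

theorem singular_iff_lamM_min {A : Type*} [LinearOrder A] (a : A) (ha : ∀ e : A, a ≤ e)
    (x : List A) : Singular x ↔ Singular (lamM a x ++ [a]) := by
  constructor
  · intro hs u' v' w' heq hv1 hv2 huw
    rw [List.append_assoc] at heq
    obtain ⟨p, t, rfl, hcase⟩ := struct_lam x u'.reverse (v' ++ w') heq
    have hu' : u' = (u'.reverse).reverse := (List.reverse_reverse u').symm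
    rcases hcase with ⟨hA, hB⟩ | ⟨hA, hB⟩
    · -- left cut at a block boundary
      have hu : u' = rhoM a p.reverse := by rw [hu', hA, reverse_lamM]
      obtain ⟨m, s, rfl, hcase2⟩ := struct_lam t v' w' hB.symm
      rcases hcase2 with ⟨hv, hw⟩ | ⟨hv, hw⟩
      · -- Case LL : v' = lamM a m, w' = lamM a s ++ [a]
        subst hv hw
        have hmne : m ≠ [] := by rintro rfl; exact hv1 rfl
        rw [reverse_lamM, hu, lam_append_a]
        rcases m.eq_nil_or_concat' with rfl | ⟨m₂, c, rfl⟩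
        · exact absurd rfl hmne
        · by_cases hc : c = a
          · have e1 : lamM a (m₂ ++ [c]) = a :: rhoM a m₂ := by
              rw [← lam_append_a, lamM_append, hc]
              simp [lamM_cons]
            have e2 : rhoM a (m₂ ++ [c]).reverse = a :: rhoM a m₂.reverse := by
              rw [List.reverse_append, hc]
              simp [rhoM_cons]
            rw [e1, e2, wlt_cons_cons]
            have hm2 : m₂ ≠ m₂.reverse := by
              intro h; apply hv2
              rw [reverse_lamM, e1, e2, ← h]
            have hm2ne : m₂ ≠ [] := by rintro rfl; exact hm2 rfl
            have hne : p.reverse ≠ a :: s := by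
              intro h; apply huw
              rw [hu, h]
              simp [rhoM_cons, lam_append_a]
            have key := hs p.reverse m₂ (a :: s) (by simp [hc]) hm2ne hm2 hne
            simp only [lt_irrefl, false_or, true_and, wlt_rho ha]
            rw [key, show (a :: rhoM a s) = rhoM a (a :: s) by simp [rhoM_cons],
              wlt_rho ha]
          · have hac : a < c := lt_of_le_of_ne (ha c) (Ne.symm hc)
            have e2 : rhoM a (m₂ ++ [c]).reverse = c :: (a :: rhoM a m₂.reverse) := by
              rw [List.reverse_append]
              simp [rhoM_cons, hc]
            have hL : Wlt (lamM a (m₂ ++ [c])) (rhoM a (m₂ ++ [c]).reverse) := by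
              rw [lam_head hmne, e2, wlt_cons_cons]
              exact Or.inl hac
            refine iff_of_true hL ?_
            rcases p.eq_nil_or_concat' with rfl | ⟨p₂, e, rfl⟩
            · simp only [List.reverse_nil, rhoM_nil]
              exact wlt_cons_nil _ _
            · by_cases hea : e = a
              · have e3 : rhoM a (p₂ ++ [e]).reverse = a :: rhoM a p₂.reverse := by
                  rw [List.reverse_append, hea]
                  simp [rhoM_cons]
                rw [e3, wlt_cons_cons]
                refine Or.inr ⟨rfl, ?_⟩
                rw [wlt_rho ha]
                have e4 : (a :: (m₂ ++ [c])).reverse = c :: (m₂.reverse ++ [a]) := by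
                  simp
                have hvv : (a :: (m₂ ++ [c])) ≠ (a :: (m₂ ++ [c])).reverse := by
                  intro h; rw [e4] at h
                  injection h with h5 _
                  exact hc h5.symm
                have hne2 : p₂.reverse ≠ s := by
                  intro h; apply huw
                  rw [hu, List.reverse_append, hea, lam_append_a]
                  simp [rhoM_cons, h]
                have key := hs p₂.reverse (a :: (m₂ ++ [c])) s (by simp [hea])
                  (by simp) hvv hne2
                apply key.mp
                rw [e4, wlt_cons_cons]
                exact Or.inl hac
              · have hae : a < e := lt_of_le_of_ne (ha e) (Ne.symm hea)
                have e3 : rhoM a (p₂ ++ [e]).reverse = e :: (a :: rhoM a p₂.reverse) := by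
                  rw [List.reverse_append]
                  simp [rhoM_cons, hea]
                rw [e3, wlt_cons_cons]
                exact Or.inl hae
      · -- Case LR : v' = lamM a m ++ [a], w' = rhoM a s
        subst hv hw
        have hm : m ≠ m.reverse := by
          intro h; apply hv2
          rw [reverse_lam_a, ← h]
        have hmne : m ≠ [] := by rintro rfl; exact hm rfl
        have hps : p.reverse ≠ s := by
          intro h; apply huw
          rw [hu, h]
        rw [reverse_lam_a, hu, wlt_lam_a ha, wlt_rho ha]
        exact hs p.reverse m s (by simp) hmne hm hps
    · -- left cut inside a block
      have hu : u' = lamM a p.reverse ++ [a] := by rw [hu', hA, reverse_lam_a]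
      obtain ⟨m, s, rfl, hcase2⟩ := struct_rho t v' w' hB.symm
      rcases hcase2 with ⟨hv, hw⟩ | ⟨hm, hv, hw⟩
      · -- Case RR : v' = rhoM a m, w' = rhoM a s
        subst hv hw
        have hmne : m ≠ [] := by rintro rfl; exact hv1 rfl
        rw [reverse_rhoM, hu, lam_append_a]
        obtain ⟨c, m₂, rfl⟩ := List.exists_cons_of_ne_nil hmne
        by_cases hc : c = a
        · have e1 : rhoM a (c :: m₂) = a :: rhoM a m₂ := by simp [rhoM_cons, hc]
          have e2 : lamM a (c :: m₂).reverse = a :: rhoM a m₂.reverse := by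
            rw [show (c :: m₂).reverse = m₂.reverse ++ [c] by simp, lamM_append, hc]
            have h5 : lamM a [a] = [a] := by simp [lamM_cons]
            rw [h5, lam_append_a]
          rw [e1, e2, wlt_cons_cons]
          have hm2 : m₂ ≠ m₂.reverse := by
            intro h; apply hv2
            rw [reverse_rhoM, e1, e2, ← h]
          have hm2ne : m₂ ≠ [] := by rintro rfl; exact hm2 rfl
          have hne : (a :: p.reverse) ≠ s := by
            intro h; apply huw
            rw [hu, lam_append_a, ← h]
            simp [rhoM_cons]
          have key := hs (a :: p.reverse) m₂ s (by simp [hc]) hm2ne hm2 hne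
          simp only [lt_irrefl, false_or, true_and, wlt_rho ha]
          rw [key, show (a :: rhoM a p.reverse) = rhoM a (a :: p.reverse) by
            simp [rhoM_cons], wlt_rho ha]
        · have e1 : rhoM a (c :: m₂) = c :: (a :: rhoM a m₂) := by simp [rhoM_cons, hc]
          have hL : ¬ Wlt (rhoM a (c :: m₂)) (lamM a (c :: m₂).reverse) := by
            rw [e1, lam_head (by simp), wlt_cons_cons]
            rintro (h | ⟨h, -⟩)
            exacts [not_lt_a ha c h, hc h]
          refine iff_of_false hL ?_
          cases s with
          | nil => simp
          | cons e s₂ =>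
            by_cases he : e = a
            · have e3 : rhoM a (e :: s₂) = a :: rhoM a s₂ := by simp [rhoM_cons, he]
              rw [e3, wlt_cons_cons]
              rintro (h | ⟨-, h⟩)
              · exact lt_irrefl a h
              · rw [wlt_rho ha] at h
                have hvv : ((c :: m₂) ++ [a]) ≠ ((c :: m₂) ++ [a]).reverse := by
                  intro hh
                  rw [show ((c :: m₂) ++ [a]).reverse = a :: (c :: m₂).reverse
                    by simp] at hh
                  injection hh with h5
                  exact hc h5
                have hne2 : p.reverse ≠ s₂ := by
                  intro hh; apply huw
                  rw [hu, lam_append_a, e3, hh]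
                have key := hs p.reverse ((c :: m₂) ++ [a]) s₂ (by simp [he])
                  (by simp) hvv hne2
                apply absurd (key.mpr h)
                rw [show ((c :: m₂) ++ [a]).reverse = a :: (c :: m₂).reverse by simp]
                simp only [List.cons_append, wlt_cons_cons]
                rintro (hh | ⟨hh, -⟩)
                exacts [not_lt_a ha c hh, hc hh]
            · have e3 : rhoM a (e :: s₂) = e :: (a :: rhoM a s₂) := by
                simp [rhoM_cons, he]
              rw [e3, wlt_cons_cons]
              rintro (h | ⟨h, -⟩)
              exacts [not_lt_a ha e h, he h]
      · -- Case RL : v' = (rhoM a m).dropLast, w' = a :: rhoM a s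
        subst hv hw
        have hmrev : m.reverse ≠ [] := by simpa using hm
        have hrevd := reverse_dropLast_rho (a := a) hm
        have hlen : ((rhoM a m).dropLast).length = ((rhoM a m.reverse).dropLast).length := by
          rw [List.length_dropLast, List.length_dropLast, rhoM_reverse_length]
        have hL8 := wlt_append ((rhoM a m).dropLast) ((rhoM a m.reverse).dropLast)
          [a] [a] hlen
        rw [rho_dropLast hm, rho_dropLast hmrev] at hL8
        have hWaa : ¬ Wlt [a] ([a] : List A) := by
          rw [wlt_cons_cons]
          rintro (h | ⟨-, h⟩)
          exacts [lt_irrefl a h, h]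
        have hLiff : Wlt ((rhoM a m).dropLast) ((rhoM a m.reverse).dropLast)
            ↔ Wlt m m.reverse := by
          rw [← wlt_rho ha m m.reverse, hL8]
          constructor
          · exact Or.inl
          · rintro (h | ⟨-, h⟩)
            exacts [h, absurd h hWaa]
        have hmm : m ≠ m.reverse := by
          intro h; apply hv2
          rw [hrevd, ← h]
        have hne : p.reverse ≠ s := by
          intro h; apply huw
          rw [hu, lam_append_a, h]
        have key := hs p.reverse m s (by simp) hm hmm hne
        rw [hrevd, hLiff, key, hu, lam_append_a, wlt_cons_cons]
        simp [lt_irrefl, wlt_rho ha]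
  · intro hy u v w hx hv1 hv2 huw
    have heq : lamM a x ++ [a] =
        (rhoM a u).reverse ++ (lamM a v ++ [a]) ++ rhoM a w := by
      rw [reverse_rhoM, hx, lamM_append, lamM_append]
      simp only [List.append_assoc, List.singleton_append]
      rw [lam_append_a]
    have h1 : lamM a v ++ [a] ≠ [] := by simp
    have h2 : (lamM a v ++ [a]) ≠ (lamM a v ++ [a]).reverse := by
      rw [reverse_lam_a]
      intro h
      rw [lam_append_a, lam_append_a] at h
      injection h with _ h3
      exact hv2 (rhoM_inj h3)
    have h3 : rhoM a u ≠ rhoM a w := fun h => huw (rhoM_inj h)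
    have key := hy (rhoM a u) (lamM a v ++ [a]) (rhoM a w) heq h1 h2 h3
    rw [reverse_lam_a, wlt_lam_a ha, wlt_rho ha] at key
    exact key
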